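/- Assume ω₀ = −(n−1)/2 and that σ = 0 in case n > 3 (σ ∈ ℝ arbitrary in case n = 3). Assume further that for every integer k ≥ 0 there is a constant c_k with |λ^{(k)}(t)| ≤ c_k·e^{(n−1)t} for all t, and that the limit lim_{t→−∞} λ(t)·e^{−(n−1)t} exists. Then every brane scale function f satisfies the ARW conditions with constant γ̃ = (n−1)/2 and mass m̃ = m + (κ²/n²)·ρ₀² > m; in particular lim_{τ→0⁻} f′(τ)²·e^{(n−1)f(τ)} = m + (κ²/n²)·ρ₀². -/

import Mathlib

open Real Filter Set Topology

private lemma ARW_le_inf (j : ℕ) : (j : WithTop ℕ∞) ≤ ((⊤:ℕ∞) : WithTop ℕ∞) := by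
  exact_mod_cast le_top

private lemma ARW_itd_zero_fun (j : ℕ) : iteratedDeriv j (fun _ : ℝ => (0:ℝ)) = fun _ => 0 := by
  induction j with
  | zero => simp
  | succ j ih => rw [iteratedDeriv_succ', deriv_const']; exact ih

private lemma ARW_abs_itd_mul_le {u v : ℝ → ℝ} (hu : ContDiff ℝ (⊤:ℕ∞) u)
    (hv : ContDiff ℝ (⊤:ℕ∞) v) (j : ℕ) (x : ℝ) :
    |iteratedDeriv j (fun y => u y * v y) x|
      ≤ ∑ i ∈ Finset.range (j+1),
          (j.choose i : ℝ) * |iteratedDeriv i u x| * |iteratedDeriv (j-i) v x| := by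
  have h := norm_iteratedFDeriv_mul_le (𝕜 := ℝ) hu hv x (ARW_le_inf j)
  simpa [norm_iteratedFDeriv_eq_norm_iteratedDeriv, Real.norm_eq_abs] using h

/-- weighted bounded-derivative class on `Iic X`. -/
def ARW_Wt (β X : ℝ) (w : ℤ) (u : ℝ → ℝ) : Prop :=
  ContDiff ℝ (⊤:ℕ∞) u ∧
    ∀ j : ℕ, ∃ C : ℝ, 0 ≤ C ∧ ∀ x ≤ X, |iteratedDeriv j u x| ≤ C * Real.exp (-(β * w) * x)

namespace ARW_Wt

variable {β X : ℝ} {w w' : ℤ} {u v : ℝ → ℝ}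

lemma zero : ARW_Wt β X w (fun _ => 0) :=
  ⟨contDiff_const, fun j => ⟨0, le_refl _, fun x _ => by
    rw [ARW_itd_zero_fun]; simp [Real.exp_pos]⟩⟩

lemma add (hu : ARW_Wt β X w u) (hv : ARW_Wt β X w v) :
    ARW_Wt β X w (fun x => u x + v x) := by
  refine ⟨hu.1.add hv.1, fun j => ?_⟩
  obtain ⟨C, hC0, hC⟩ := hu.2 j
  obtain ⟨D, hD0, hD⟩ := hv.2 j
  refine ⟨C + D, by positivity, fun x hx => ?_⟩
  have h1 : iteratedDeriv j (fun x => u x + v x) x = iteratedDeriv j u x + iteratedDeriv j v x := by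
    have := iteratedDerivWithin_add (mem_univ x) uniqueDiffOn_univ
      (hu.1.of_le (ARW_le_inf j)).contDiffWithinAt (hv.1.of_le (ARW_le_inf j)).contDiffWithinAt
    simpa [iteratedDerivWithin_univ, Pi.add_def] using this
  calc |iteratedDeriv j (fun x => u x + v x) x| ≤ |iteratedDeriv j u x| + |iteratedDeriv j v x| := by
        rw [h1]; exact abs_add_le _ _
    _ ≤ C * Real.exp (-(β * w) * x) + D * Real.exp (-(β * w) * x) := add_le_add (hC x hx) (hD x hx)
    _ = (C + D) * Real.exp (-(β * w) * x) := by ring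

lemma mul (hu : ARW_Wt β X w u) (hv : ARW_Wt β X w' v) :
    ARW_Wt β X (w + w') (fun x => u x * v x) := by
  refine ⟨hu.1.mul hv.1, fun j => ?_⟩
  have hC : ∃ C : ℝ, 0 ≤ C ∧ ∀ i ≤ j, ∀ x ≤ X,
      |iteratedDeriv i u x| ≤ C * Real.exp (-(β * w) * x) := by
    clear hv
    induction j with
    | zero =>
      obtain ⟨C, hC0, hC⟩ := hu.2 0
      refine ⟨C, hC0, fun i hi x hx => ?_⟩
      obtain rfl : i = 0 := Nat.le_zero.mp hi
      exact hC x hx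
    | succ j ih =>
      obtain ⟨C, hC0, hC⟩ := ih
      obtain ⟨D, hD0, hD⟩ := hu.2 (j+1)
      refine ⟨max C D, le_max_of_le_left hC0, fun i hi x hx => ?_⟩
      rcases Nat.lt_succ_iff_lt_or_eq.mp (Nat.lt_succ_of_le hi) with h | h
      · exact (hC i (Nat.lt_succ_iff.mp h) x hx).trans
          (mul_le_mul_of_nonneg_right (le_max_left _ _) (Real.exp_pos _).le)
      · exact h ▸ (hD x hx).trans
          (mul_le_mul_of_nonneg_right (le_max_right _ _) (Real.exp_pos _).le)
  obtain ⟨C, hC0, hC⟩ := hC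
  have hD : ∃ D : ℝ, 0 ≤ D ∧ ∀ i ≤ j, ∀ x ≤ X,
      |iteratedDeriv i v x| ≤ D * Real.exp (-(β * w') * x) := by
    clear hu hC
    induction j with
    | zero =>
      obtain ⟨D, hD0, hD⟩ := hv.2 0
      refine ⟨D, hD0, fun i hi x hx => ?_⟩
      obtain rfl : i = 0 := Nat.le_zero.mp hi
      exact hD x hx
    | succ j ih =>
      obtain ⟨D, hD0, hD⟩ := ih
      obtain ⟨D', hD'0, hD'⟩ := hv.2 (j+1)
      refine ⟨max D D', le_max_of_le_left hD0, fun i hi x hx => ?_⟩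
      rcases Nat.lt_succ_iff_lt_or_eq.mp (Nat.lt_succ_of_le hi) with h | h
      · exact (hD i (Nat.lt_succ_iff.mp h) x hx).trans
          (mul_le_mul_of_nonneg_right (le_max_left _ _) (Real.exp_pos _).le)
      · exact h ▸ (hD' x hx).trans
          (mul_le_mul_of_nonneg_right (le_max_right _ _) (Real.exp_pos _).le)
  obtain ⟨D, hD0, hD⟩ := hD
  refine ⟨(∑ i ∈ Finset.range (j+1), (j.choose i : ℝ)) * (C * D), by positivity, fun x hx => ?_⟩
  calc |iteratedDeriv j (fun y => u y * v y) x|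
      ≤ ∑ i ∈ Finset.range (j+1),
          (j.choose i : ℝ) * |iteratedDeriv i u x| * |iteratedDeriv (j-i) v x| :=
        ARW_abs_itd_mul_le hu.1 hv.1 j x
    _ ≤ ∑ i ∈ Finset.range (j+1),
          (j.choose i : ℝ) * (C * D * Real.exp (-(β * ((w + w' : ℤ) : ℝ)) * x)) := by
        refine Finset.sum_le_sum fun i hi => ?_
        have hi' : i ≤ j := Nat.lt_succ_iff.mp (Finset.mem_range.mp hi)
        have h1 := hC i hi' x hx
        have h2 := hD (j - i) (Nat.sub_le _ _) x hx
        have hexp : Real.exp (-(β * w) * x) * Real.exp (-(β * w') * x)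
            = Real.exp (-(β * ((w + w' : ℤ) : ℝ)) * x) := by
          rw [← Real.exp_add]; push_cast; ring_nf
        have hmul : |iteratedDeriv i u x| * |iteratedDeriv (j-i) v x|
            ≤ C * D * Real.exp (-(β * ((w + w' : ℤ) : ℝ)) * x) := by
          calc |iteratedDeriv i u x| * |iteratedDeriv (j-i) v x|
              ≤ (C * Real.exp (-(β * w) * x)) * (D * Real.exp (-(β * w') * x)) :=
                mul_le_mul h1 h2 (abs_nonneg _) ((abs_nonneg _).trans h1)
            _ = C * D * (Real.exp (-(β * w) * x) * Real.exp (-(β * w') * x)) := by ring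
            _ = C * D * Real.exp (-(β * ((w + w' : ℤ) : ℝ)) * x) := by rw [hexp]
        rw [mul_assoc]
        exact mul_le_mul_of_nonneg_left hmul (Nat.cast_nonneg _)
    _ = (∑ i ∈ Finset.range (j+1), (j.choose i : ℝ)) * (C * D) * Real.exp (-(β * ((w + w' : ℤ) : ℝ)) * x) := by
        rw [Finset.sum_mul, Finset.sum_mul]
        refine Finset.sum_congr rfl fun i _ => by ring

lemma deriv' (hu : ARW_Wt β X w u) : ARW_Wt β X w (deriv u) := by
  refine ⟨(contDiff_infty_iff_deriv.mp hu.1).2, fun j => ?_⟩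
  obtain ⟨C, hC0, hC⟩ := hu.2 (j+1)
  exact ⟨C, hC0, fun x hx => by rw [← iteratedDeriv_succ']; exact hC x hx⟩

lemma const (c : ℝ) : ARW_Wt β X 0 (fun _ => c) := by
  refine ⟨contDiff_const, fun j => ?_⟩
  cases j with
  | zero => exact ⟨|c|, abs_nonneg _, fun x _ => by simp⟩
  | succ j =>
    refine ⟨0, le_refl _, fun x _ => ?_⟩
    rw [iteratedDeriv_succ', deriv_const', ARW_itd_zero_fun]
    simp [Real.exp_pos]

lemma const_mul (c : ℝ) (hu : ARW_Wt β X w u) : ARW_Wt β X w (fun x => c * u x) := by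
  have := (const (β := β) (X := X) c).mul hu
  simpa using this

lemma of_w (h : w = w') (hu : ARW_Wt β X w u) : ARW_Wt β X w' u := h ▸ hu

lemma neg (hu : ARW_Wt β X w u) : ARW_Wt β X w (fun x => -u x) := by
  refine ⟨hu.1.neg, fun j => ?_⟩
  obtain ⟨C, hC0, hC⟩ := hu.2 j
  refine ⟨C, hC0, fun x hx => ?_⟩
  rw [iteratedDeriv_fun_neg, abs_neg]
  exact hC x hx

lemma mono (hX : X ≤ 0) (hβ : 0 ≤ β) (hw : w ≤ w') (hu : ARW_Wt β X w u) :
    ARW_Wt β X w' u := by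
  refine ⟨hu.1, fun j => ?_⟩
  obtain ⟨C, hC0, hC⟩ := hu.2 j
  refine ⟨C, hC0, fun x hx => (hC x hx).trans (mul_le_mul_of_nonneg_left ?_ hC0)⟩
  apply Real.exp_le_exp.mpr
  have hx0 : x ≤ 0 := hx.trans hX
  have : (β * w') * (-x) ≤ (β * w) * (-x)→ True := fun _ => trivial
  nlinarith [mul_le_mul_of_nonneg_left (Int.cast_le.mpr hw : (w:ℝ) ≤ w') hβ]

lemma exp_mem (hX : X ≤ 0) {c : ℝ} (h : -(β * w) ≤ c) :
    ARW_Wt β X w (fun x => Real.exp (c * x)) := by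
  refine ⟨(contDiff_const.mul contDiff_id).exp, fun j => ?_⟩
  refine ⟨|c|^j, by positivity, fun x hx => ?_⟩
  rw [iteratedDeriv_exp_const_mul]
  rw [abs_mul, abs_pow, Real.abs_exp]
  refine mul_le_mul_of_nonneg_left ?_ (by positivity)
  exact Real.exp_le_exp.mpr (by nlinarith [hx.trans hX])

end ARW_Wt

/-- `f` satisfies the ARW conditions with constant `γ > 0` and mass `mt > 0`:
`f'² e^{2γf} → mt` as `τ → 0⁻`, the limit of `f'' + γ f'²` exists, and the iterated
derivatives of `f'' + γ f'²` and of `f` of order `k ≥ 1` are bounded by `c_k |f'|^k`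
near the singularity. -/
def ARWConds (γ mt : ℝ) (f : ℝ → ℝ) : Prop :=
  Filter.Tendsto (fun τ => (deriv f τ) ^ 2 * Real.exp (2 * γ * f τ))
      (nhdsWithin 0 (Set.Iio 0)) (nhds mt)
  ∧ (∃ L : ℝ, Filter.Tendsto (fun τ => deriv (deriv f) τ + γ * (deriv f τ) ^ 2)
      (nhdsWithin 0 (Set.Iio 0)) (nhds L))
  ∧ ∃ δ : ℝ, 0 < δ ∧ ∀ k : ℕ, 1 ≤ k → ∃ c : ℝ,
      ∀ τ ∈ Set.Ioo (-δ) (0:ℝ),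
        |iteratedDeriv k (fun s => deriv (deriv f) s + γ * (deriv f s) ^ 2) τ|
            ≤ c * |deriv f τ| ^ k
        ∧ |iteratedDeriv k f τ| ≤ c * |deriv f τ| ^ k

set_option maxHeartbeats 1000000

/-- If `ω₀ = -(n-1)/2` (with `σ = 0` if `n > 3`), `|lam⁽ᵏ⁾(t)| ≤ c_k e^{(n-1)t}` for all
`k`, and `lam(t) e^{-(n-1)t}` has a limit as `t → -∞`, then every brane scale function
satisfies the ARW conditions with constant `γ = (n-1)/2` and mass
`m + (κ²/n²) ρ₀² > m`. -/
theorem arw_sufficient_critical_omega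
    (n : ℕ) (hn : 3 ≤ n)
    (m Λ κt κ σ ω₀ ρ₀ : ℝ)
    (hm : 0 < m) (hΛ : Λ ≤ 0)
    (hκt : κt = -1 ∨ κt = 0 ∨ κt = 1) (hΛκt : Λ = 0 → κt = 1)
    (hκ : κ ≠ 0) (hρ₀ : 0 < ρ₀)
    (lam μt : ℝ → ℝ)
    (hlam : ContDiff ℝ (⊤ : ℕ∞) lam)
    (hlam0 : Filter.Tendsto lam Filter.atBot (nhds 0))
    (hμt : ∀ t : ℝ, HasDerivAt μt (lam t) t)
    (hμt0 : Filter.Tendsto μt Filter.atBot (nhds 0))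
    (a : ℝ) (ha : 0 < a) (f : ℝ → ℝ)
    (hf : ContDiffOn ℝ (⊤ : ℕ∞) f (Set.Ioo (-a) 0))
    (hf' : ∀ τ ∈ Set.Ioo (-a) (0:ℝ), deriv f τ < 0)
    (hfb : Filter.Tendsto f (nhdsWithin 0 (Set.Iio 0)) Filter.atBot)
    (hFried : ∀ τ ∈ Set.Ioo (-a) (0:ℝ),
      (deriv f τ) ^ 2
        = m * Real.exp (-((n : ℝ) - 1) * f τ)
          + (2 * Λ / ((n : ℝ) * ((n : ℝ) + 1))) * Real.exp (2 * f τ) - κt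
          + (κ ^ 2 / (n : ℝ) ^ 2)
            * (σ + ρ₀ * Real.exp (-((n : ℝ) + ω₀) * f τ - μt (f τ))) ^ 2
            * Real.exp (2 * f τ))
    (hω₀ : ω₀ = -((n : ℝ) - 1) / 2)
    (hσ : 3 < n → σ = 0)
    (hlamB : ∀ k : ℕ, ∃ c : ℝ, ∀ t : ℝ,
      |iteratedDeriv k lam t| ≤ c * Real.exp (((n : ℝ) - 1) * t))
    (hlamlim : ∃ L : ℝ, Filter.Tendsto (fun t => lam t * Real.exp (-((n : ℝ) - 1) * t))
      Filter.atBot (nhds L)) :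
    ARWConds (((n : ℝ) - 1) / 2) (m + κ ^ 2 / (n : ℝ) ^ 2 * ρ₀ ^ 2) f
      ∧ m < m + κ ^ 2 / (n : ℝ) ^ 2 * ρ₀ ^ 2
      ∧ Filter.Tendsto (fun τ => (deriv f τ) ^ 2 * Real.exp (((n : ℝ) - 1) * f τ))
          (nhdsWithin 0 (Set.Iio 0)) (nhds (m + κ ^ 2 / (n : ℝ) ^ 2 * ρ₀ ^ 2)) := by
  subst hω₀
  have hnr : (3:ℝ) ≤ (n:ℝ) := by exact_mod_cast hn
  have hn0 : (0:ℝ) < (n:ℝ) := by linarith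
  set β : ℝ := ((n:ℝ) - 1) / 2 with hβ
  have hβ0 : (0:ℝ) ≤ β := by rw [hβ]; linarith
  set c₀ : ℝ := κ ^ 2 / (n:ℝ) ^ 2 with hc₀
  have hc₀0 : 0 < c₀ := by
    rw [hc₀]
    have h1 : κ ^ 2 ≠ 0 := pow_ne_zero 2 hκ
    have h2 : 0 < κ ^ 2 := (pow_two_nonneg κ).lt_of_ne' h1
    positivity
  set mt : ℝ := m + c₀ * ρ₀ ^ 2 with hmt
  have hmt0 : 0 < mt := by rw [hmt]; positivity
  set b : ℝ := 2 * Λ / ((n:ℝ) * ((n:ℝ) + 1)) with hb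
  -- μt is smooth
  have hμs : ContDiff ℝ (⊤ : ℕ∞) μt := by
    rw [show ((⊤:ℕ∞) : WithTop ℕ∞) = (⊤:ℕ∞) from rfl, contDiff_infty_iff_deriv]
    refine ⟨fun x => (hμt x).differentiableAt, ?_⟩
    have h : deriv μt = lam := funext fun x => (hμt x).deriv
    rw [h]; exact hlam
  -- basic functions
  set B : ℝ → ℝ := fun x => Real.exp (-μt x) with hBdef
  set e1 : ℝ → ℝ := fun x => Real.exp (((n:ℝ) + 1) * x) with he1def
  set e2 : ℝ → ℝ := fun x => Real.exp (((n:ℝ) - 1) * x) with he2def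
  set e3 : ℝ → ℝ := fun x => Real.exp ((((n:ℝ) + 1) / 2) * x) with he3def
  set ew : ℝ → ℝ := fun x => Real.exp (-((n:ℝ) - 1) * x) with hewdef
  set P : ℝ → ℝ := fun x => σ * e3 x + ρ₀ * B x with hPdef
  set P' : ℝ → ℝ := fun x => σ * (((n:ℝ) + 1) / 2 * e3 x) + ρ₀ * (B x * -lam x) with hP'def
  set E : ℝ → ℝ := fun x => m + b * e1 x + -κt * e2 x + c₀ * (P x * P x) with hEdef
  set E' : ℝ → ℝ := fun x => b * (((n:ℝ) + 1) * e1 x) + -κt * (((n:ℝ) - 1) * e2 x)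
      + c₀ * (P' x * P x + P x * P' x) with hE'def
  set Φ : ℝ → ℝ := fun x => ew x * E x with hΦdef
  set Φ' : ℝ → ℝ := fun x => ew x * (E' x + -((n:ℝ) - 1) * E x) with hΦ'def
  set G : ℝ → ℝ := fun x => ew x * ((1/2) * E' x) with hGdef
  set H : ℝ → ℝ := fun x => (1/2) * Φ' x with hHdef
  -- smoothness
  have hBs : ContDiff ℝ (⊤ : ℕ∞) B := by rw [hBdef]; exact (Real.contDiff_exp.comp hμs.neg)
  -- derivative facts
  have hBd : ∀ x, HasDerivAt B (B x * -lam x) x := by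
    intro x; rw [hBdef]; simpa using ((hμt x).neg).exp
  have he3d : ∀ x, HasDerivAt e3 (((n:ℝ) + 1) / 2 * e3 x) x := by
    intro x; rw [he3def]
    have h := (((hasDerivAt_id x).const_mul ((((n:ℝ) + 1) / 2))).exp)
    refine h.congr_deriv ?_
    simp [he3def]; ring
  have he1d : ∀ x, HasDerivAt e1 (((n:ℝ) + 1) * e1 x) x := by
    intro x; rw [he1def]
    have h := (((hasDerivAt_id x).const_mul (((n:ℝ) + 1))).exp)
    refine h.congr_deriv ?_
    simp [he1def]; ring
  have he2d : ∀ x, HasDerivAt e2 (((n:ℝ) - 1) * e2 x) x := by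
    intro x; rw [he2def]
    have h := (((hasDerivAt_id x).const_mul (((n:ℝ) - 1))).exp)
    refine h.congr_deriv ?_
    simp [he2def]; ring
  have hewd : ∀ x, HasDerivAt ew (-((n:ℝ) - 1) * ew x) x := by
    intro x; rw [hewdef]
    have h := (((hasDerivAt_id x).const_mul ((-((n:ℝ) - 1)))).exp)
    refine h.congr_deriv ?_
    simp [hewdef]; ring
  have hPd : ∀ x, HasDerivAt P (P' x) x := by
    intro x; rw [hPdef, hP'def]
    exact ((he3d x).const_mul σ).add ((hBd x).const_mul ρ₀)
  have hEd : ∀ x, HasDerivAt E (E' x) x := by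
    intro x; rw [hEdef, hE'def]
    have h := (((hasDerivAt_const x m).add ((he1d x).const_mul b)).add
        ((he2d x).const_mul (-κt))).add (((hPd x).mul (hPd x)).const_mul c₀)
    refine h.congr_deriv ?_
    ring
  have hΦd : ∀ x, HasDerivAt Φ (Φ' x) x := by
    intro x; rw [hΦdef, hΦ'def]
    have h := (hewd x).mul (hEd x)
    refine h.congr_deriv ?_
    ring
  have he3s : ContDiff ℝ (⊤ : ℕ∞) e3 := by
    rw [he3def]; exact Real.contDiff_exp.comp (contDiff_const.mul contDiff_id)
  have he1s : ContDiff ℝ (⊤ : ℕ∞) e1 := by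
    rw [he1def]; exact Real.contDiff_exp.comp (contDiff_const.mul contDiff_id)
  have he2s : ContDiff ℝ (⊤ : ℕ∞) e2 := by
    rw [he2def]; exact Real.contDiff_exp.comp (contDiff_const.mul contDiff_id)
  have hews : ContDiff ℝ (⊤ : ℕ∞) ew := by
    rw [hewdef]; exact Real.contDiff_exp.comp (contDiff_const.mul contDiff_id)
  have hPs : ContDiff ℝ (⊤ : ℕ∞) P := by
    rw [hPdef]; exact (contDiff_const.mul he3s).add (contDiff_const.mul hBs)
  have hEs : ContDiff ℝ (⊤ : ℕ∞) E := by
    rw [hEdef]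
    exact (((contDiff_const.add (contDiff_const.mul he1s)).add
      (contDiff_const.mul he2s)).add (contDiff_const.mul (hPs.mul hPs)))
  -- exponential relations
  have hxA : ∀ x : ℝ, Real.exp (((n:ℝ) + 1) * x) = e3 x * e3 x := by
    intro x
    rw [he3def, ← Real.exp_add, show ((n:ℝ)+1)/2 * x + ((n:ℝ)+1)/2 * x = ((n:ℝ)+1) * x by ring]
  have hxB : ∀ x : ℝ, Real.exp (((n:ℝ) - 1) * x) = (ew x)⁻¹ := by
    intro x
    rw [hewdef, ← Real.exp_neg]
    congr 1; ring
  have hxC : ∀ x : ℝ, Real.exp (2 * x) = ew x * (e3 x * e3 x) := by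
    intro x
    rw [hewdef, he3def, ← Real.exp_add, ← Real.exp_add]
    congr 1; ring
  have hxD : ∀ x : ℝ, Real.exp ((( 3 - (n:ℝ))/2) * x) = ew x * e3 x := by
    intro x
    rw [hewdef, he3def, ← Real.exp_add]
    congr 1; ring
  have hxE : ∀ x : ℝ, Real.exp (-((n:ℝ) + -((n:ℝ) - 1) / 2) * x - μt x) = (e3 x)⁻¹ * B x := by
    intro x
    rw [hBdef, he3def, ← Real.exp_neg, ← Real.exp_add]
    congr 1; ring
  have hew_x : ∀ x : ℝ, Real.exp (-((n:ℝ) - 1) * x) = ew x := fun x => by rw [hewdef]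
  have hewne : ∀ x : ℝ, ew x ≠ 0 := fun x => by rw [hewdef]; exact (Real.exp_pos _).ne'
  have he3ne : ∀ x : ℝ, e3 x ≠ 0 := fun x => by rw [he3def]; exact (Real.exp_pos _).ne'
  -- the Friedmann RHS equals Φ
  have hRHS : ∀ x : ℝ,
      m * Real.exp (-((n : ℝ) - 1) * x)
        + (2 * Λ / ((n : ℝ) * ((n : ℝ) + 1))) * Real.exp (2 * x) - κt
        + (κ ^ 2 / (n : ℝ) ^ 2)
          * (σ + ρ₀ * Real.exp (-((n : ℝ) + -((n:ℝ) - 1) / 2) * x - μt (x))) ^ 2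
          * Real.exp (2 * x) = Φ x := by
    intro x
    rw [hxE x, hxC x, hew_x x]
    simp only [hΦdef, hEdef, hPdef, he1def, he2def, hc₀, hb]
    rw [hxA x, hxB x]
    have := hewne x; have := he3ne x
    field_simp
    ring
  have hΦfried : ∀ τ ∈ Set.Ioo (-a) (0:ℝ), (deriv f τ) ^ 2 = Φ (f τ) := fun τ hτ =>
    (hFried τ hτ).trans (hRHS (f τ))
  -- differentiability of f, f'
  have hsopen : IsOpen (Set.Ioo (-a) (0:ℝ)) := isOpen_Ioo
  have hfd1 : ∀ τ ∈ Set.Ioo (-a) (0:ℝ), DifferentiableAt ℝ f τ := fun τ hτ =>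
    (hf.contDiffAt (hsopen.mem_nhds hτ)).differentiableAt (by simp)
  have hdfC : ContDiffOn ℝ (⊤ : ℕ∞) (deriv f) (Set.Ioo (-a) 0) :=
    hf.deriv_of_isOpen hsopen (by exact_mod_cast le_top)
  have hfd2 : ∀ τ ∈ Set.Ioo (-a) (0:ℝ), DifferentiableAt ℝ (deriv f) τ := fun τ hτ =>
    (hdfC.contDiffAt (hsopen.mem_nhds hτ)).differentiableAt (by simp)
  -- second derivative identity
  have hf'' : ∀ τ ∈ Set.Ioo (-a) (0:ℝ), deriv (deriv f) τ = H (f τ) := by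
    intro τ hτ
    have hev : (fun t => (deriv f t) ^ 2) =ᶠ[nhds τ] fun t => Φ (f t) :=
      Filter.eventually_of_mem (hsopen.mem_nhds hτ) (fun t ht => hΦfried t ht)
    have hd1 : HasDerivAt (fun t => (deriv f t) ^ 2)
        (2 * deriv f τ * deriv (deriv f) τ) τ := by
      have h := ((hfd2 τ hτ).hasDerivAt).pow 2
      refine h.congr_deriv ?_
      push_cast
      ring
    have hd2 : HasDerivAt (fun t => Φ (f t)) (Φ' (f τ) * deriv f τ) τ :=
      (hΦd (f τ)).comp τ (hfd1 τ hτ).hasDerivAt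
    have heq : 2 * deriv f τ * deriv (deriv f) τ = Φ' (f τ) * deriv f τ := by
      rw [← hd1.deriv, ← hd2.deriv]
      exact hev.deriv_eq
    have hne : deriv f τ ≠ 0 := (hf' τ hτ).ne
    have h2 : (2 * deriv (deriv f) τ - Φ' (f τ)) * deriv f τ = 0 := by linear_combination heq
    rcases mul_eq_zero.mp h2 with h | h
    · rw [hHdef]; dsimp only; linarith
    · exact absurd h hne
  -- limits at -infinity
  have hexp0 : ∀ c : ℝ, 0 < c → Filter.Tendsto (fun x : ℝ => Real.exp (c * x))
      Filter.atBot (nhds 0) := by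
    intro c hc
    exact Real.tendsto_exp_atBot.comp (Filter.Tendsto.const_mul_atBot hc Filter.tendsto_id)
  have he1t : Filter.Tendsto e1 Filter.atBot (nhds 0) := by
    rw [he1def]; exact hexp0 _ (by linarith)
  have he2t : Filter.Tendsto e2 Filter.atBot (nhds 0) := by
    rw [he2def]; exact hexp0 _ (by linarith)
  have he3t : Filter.Tendsto e3 Filter.atBot (nhds 0) := by
    rw [he3def]; exact hexp0 _ (by linarith)
  have hBt : Filter.Tendsto B Filter.atBot (nhds 1) := by
    rw [hBdef]
    have h0 : Filter.Tendsto (fun x => -μt x) Filter.atBot (nhds 0) := by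
      simpa using hμt0.neg
    have h := (Real.continuous_exp.tendsto 0).comp h0
    simpa [Function.comp_def] using h
  have hPt : Filter.Tendsto P Filter.atBot (nhds ρ₀) := by
    rw [hPdef]
    have h := (he3t.const_mul σ).add (hBt.const_mul ρ₀)
    simpa using h
  have hEt : Filter.Tendsto E Filter.atBot (nhds mt) := by
    rw [hEdef]
    have h := (((tendsto_const_nhds (x := m)).add (he1t.const_mul b)).add
      (he2t.const_mul (-κt))).add ((hPt.mul hPt).const_mul c₀)
    have hv : m + b * 0 + -κt * 0 + c₀ * (ρ₀ * ρ₀) = mt := by rw [hmt]; ring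
    rwa [hv] at h
  -- choose X₂
  obtain ⟨X₂, hX₂0, hX₂E, hX₂μ⟩ : ∃ X₂ : ℝ, X₂ ≤ 0 ∧ (∀ x ≤ X₂, mt / 2 ≤ E x)
      ∧ (∀ x ≤ X₂, |μt x| ≤ 1) := by
    have h1 : ∀ᶠ x in Filter.atBot, mt / 2 ≤ E x :=
      hEt.eventually (eventually_ge_nhds (by linarith))
    have h2 : ∀ᶠ x in Filter.atBot, |μt x| ≤ 1 := by
      have h3 : ∀ᶠ y in nhds (0:ℝ), |y| ≤ 1 := by
        filter_upwards [Metric.closedBall_mem_nhds (0:ℝ) one_pos] with y hy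
        simpa [Real.dist_eq] using hy
      exact hμt0.eventually h3
    obtain ⟨X, hX⟩ := Filter.eventually_atBot.mp (h1.and h2)
    exact ⟨min X 0, min_le_right _ _,
      fun x hx => (hX x (le_trans hx (min_le_left _ _))).1,
      fun x hx => (hX x (le_trans hx (min_le_left _ _))).2⟩
  -- choose δ
  obtain ⟨δ, hδ0, hδa, hδX⟩ : ∃ δ : ℝ, 0 < δ ∧ δ ≤ a ∧ ∀ τ ∈ Set.Ioo (-δ) (0:ℝ), f τ ≤ X₂ := by
    have h := hfb.eventually (Filter.eventually_le_atBot X₂)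
    obtain ⟨ε, hε0, hε⟩ := Metric.mem_nhdsWithin_iff.mp h
    refine ⟨min ε a, lt_min hε0 ha, min_le_right _ _, fun τ hτ => ?_⟩
    refine hε ⟨?_, hτ.2⟩
    rw [Metric.mem_ball, Real.dist_eq, sub_zero]
    have h1 : -min ε a < τ := hτ.1
    have h2 : τ < 0 := hτ.2
    rw [abs_of_neg h2]
    have := min_le_left ε a
    linarith
  have hδsub : Set.Ioo (-δ) (0:ℝ) ⊆ Set.Ioo (-a) 0 := fun τ hτ =>
    ⟨by have := hτ.1; linarith, hτ.2⟩
  -- uniform bounds on lam and B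
  have hlamB' : ∀ k : ℕ, ∃ c, 0 ≤ c ∧ ∀ t : ℝ,
      |iteratedDeriv k lam t| ≤ c * Real.exp (((n:ℝ) - 1) * t) := by
    intro k; obtain ⟨c, hc⟩ := hlamB k
    exact ⟨max c 0, le_max_right _ _, fun t => (hc t).trans
      (mul_le_mul_of_nonneg_right (le_max_left _ _) (Real.exp_pos _).le)⟩
  have hUlam : ∀ N : ℕ, ∃ c, 0 ≤ c ∧ ∀ i ≤ N, ∀ t : ℝ,
      |iteratedDeriv i lam t| ≤ c * Real.exp (((n:ℝ) - 1) * t) := by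
    intro N; induction N with
    | zero =>
      obtain ⟨c, hc0, hc⟩ := hlamB' 0
      refine ⟨c, hc0, fun i hi t => ?_⟩
      obtain rfl : i = 0 := Nat.le_zero.mp hi
      exact hc t
    | succ N ih =>
      obtain ⟨c, hc0, hc⟩ := ih
      obtain ⟨c', hc'0, hc'⟩ := hlamB' (N + 1)
      refine ⟨max c c', le_max_of_le_left hc0, fun i hi t => ?_⟩
      rcases Nat.lt_succ_iff_lt_or_eq.mp (Nat.lt_succ_of_le hi) with h | h
      · exact (hc i (Nat.lt_succ_iff.mp h) t).trans
          (mul_le_mul_of_nonneg_right (le_max_left _ _) (Real.exp_pos _).le)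
      · exact h ▸ (hc' t).trans
          (mul_le_mul_of_nonneg_right (le_max_right _ _) (Real.exp_pos _).le)
  have hBder : deriv B = fun x => B x * -lam x := funext fun x => (hBd x).deriv
  have hUB : ∀ N : ℕ, ∃ C, 0 ≤ C ∧ ∀ i ≤ N, ∀ x ≤ X₂, |iteratedDeriv i B x| ≤ C := by
    intro N; induction N with
    | zero =>
      refine ⟨Real.exp 1, (Real.exp_pos _).le, fun i hi x hx => ?_⟩
      obtain rfl : i = 0 := Nat.le_zero.mp hi
      rw [iteratedDeriv_zero, hBdef]
      dsimp only
      rw [abs_of_pos (Real.exp_pos _)]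
      exact Real.exp_le_exp.mpr ((neg_le_abs _).trans (hX₂μ x hx))
    | succ N ih =>
      obtain ⟨C, hC0, hC⟩ := ih
      obtain ⟨c, hc0, hc⟩ := hUlam N
      refine ⟨max C ((∑ i ∈ Finset.range (N + 1), (N.choose i : ℝ)) * (C * c)),
        le_max_of_le_left hC0, fun i hi x hx => ?_⟩
      rcases Nat.lt_succ_iff_lt_or_eq.mp (Nat.lt_succ_of_le hi) with h | h
      · exact (hC i (Nat.lt_succ_iff.mp h) x hx).trans (le_max_left _ _)
      · subst h
        rw [iteratedDeriv_succ', hBder]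
        have hmul := ARW_abs_itd_mul_le (u := B) (v := fun x => -lam x) hBs hlam.neg N x
        refine le_trans hmul (le_trans ?_ (le_max_right _ _))
        rw [Finset.sum_mul]
        refine Finset.sum_le_sum fun i hi' => ?_
        have hi2 : i ≤ N := Nat.lt_succ_iff.mp (Finset.mem_range.mp hi')
        have h1 : |iteratedDeriv i B x| ≤ C := hC i hi2 x hx
        have h2 : |iteratedDeriv (N - i) (fun x => -lam x) x| ≤ c := by
          rw [iteratedDeriv_fun_neg, abs_neg]
          refine (hc (N - i) (Nat.sub_le _ _) x).trans ?_
          have hee : Real.exp (((n:ℝ) - 1) * x) ≤ 1 := by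
            rw [Real.exp_le_one_iff]
            exact mul_nonpos_of_nonneg_of_nonpos (by linarith) (hx.trans hX₂0)
          exact mul_le_of_le_one_right hc0 hee
        calc (N.choose i : ℝ) * |iteratedDeriv i B x| * |iteratedDeriv (N - i) (fun x => -lam x) x|
            ≤ (N.choose i : ℝ) * C * c := by
              have hc1 : (N.choose i : ℝ) * |iteratedDeriv i B x| ≤ (N.choose i : ℝ) * C :=
                mul_le_mul_of_nonneg_left h1 (Nat.cast_nonneg _)
              exact mul_le_mul hc1 h2 (abs_nonneg _) (by positivity)
          _ = (N.choose i : ℝ) * (C * c) := by ring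
  -- weighted class memberships
  have hWB : ARW_Wt β X₂ 0 B := by
    refine ⟨hBs, fun j => ?_⟩
    obtain ⟨C, hC0, hC⟩ := hUB j
    refine ⟨C, hC0, fun x hx => ?_⟩
    have h := hC j le_rfl x hx
    simpa using h
  have hWlam : ARW_Wt β X₂ (-2) lam := by
    refine ⟨hlam, fun j => ?_⟩
    obtain ⟨c, hc0, hc⟩ := hlamB' j
    refine ⟨c, hc0, fun x hx => ?_⟩
    have h := hc x
    have he : Real.exp (((n:ℝ) - 1) * x) = Real.exp (-(β * ((-2:ℤ):ℝ)) * x) := by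
      congr 1; rw [hβ]; push_cast; ring
    rwa [he] at h
  have hWe3 : ARW_Wt β X₂ 0 e3 := by
    rw [he3def]
    refine ARW_Wt.exp_mem hX₂0 ?_
    push_cast; simp; linarith
  have hWe1 : ARW_Wt β X₂ (-2) e1 := by
    rw [he1def]
    refine ARW_Wt.exp_mem hX₂0 ?_
    rw [hβ]; push_cast; nlinarith
  have hWe1w0 : ARW_Wt β X₂ 0 e1 := by
    rw [he1def]
    refine ARW_Wt.exp_mem hX₂0 ?_
    push_cast; simp; linarith
  have hWe2 : ARW_Wt β X₂ (-2) e2 := by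
    rw [he2def]
    refine ARW_Wt.exp_mem hX₂0 (le_of_eq ?_)
    rw [hβ]; push_cast; ring
  have hWe2w0 : ARW_Wt β X₂ 0 e2 := by
    rw [he2def]
    refine ARW_Wt.exp_mem hX₂0 ?_
    push_cast; simp; linarith
  have hWew2 : ARW_Wt β X₂ 2 ew := by
    rw [hewdef]
    refine ARW_Wt.exp_mem hX₂0 (le_of_eq ?_)
    rw [hβ]; push_cast; ring
  have hWP : ARW_Wt β X₂ 0 P := by
    rw [hPdef]; exact (hWe3.const_mul σ).add (hWB.const_mul ρ₀)
  have hWP' : ARW_Wt β X₂ (-2) P' := by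
    rw [hP'def]
    have h2 : ARW_Wt β X₂ (-2) (fun x => ρ₀ * (B x * -lam x)) :=
      ((hWB.mul hWlam.neg).of_w (by norm_num)).const_mul ρ₀
    have h1 : ARW_Wt β X₂ (-2) (fun x => σ * (((n:ℝ) + 1) / 2 * e3 x)) := by
      rcases eq_or_lt_of_le hn with h3 | h3
      · have hn3 : (n:ℝ) = 3 := by exact_mod_cast h3.symm
        have he3' : ARW_Wt β X₂ (-2) e3 := by
          rw [he3def]
          refine ARW_Wt.exp_mem hX₂0 ?_
          rw [hβ, hn3]; push_cast; norm_num
        exact (he3'.const_mul _).const_mul σ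
      · rw [hσ h3]
        simp only [zero_mul]
        exact ARW_Wt.zero
    exact h1.add h2
  have hWE : ARW_Wt β X₂ 0 E := by
    rw [hEdef]
    exact (((ARW_Wt.const m).add (hWe1w0.const_mul b)).add
      (hWe2w0.const_mul (-κt))).add (((hWP.mul hWP).of_w (by norm_num)).const_mul c₀)
  have hWE' : ARW_Wt β X₂ (-2) E' := by
    rw [hE'def]
    refine ((((hWe1.const_mul _).const_mul b).add
      ((hWe2.const_mul _).const_mul (-κt))).add ?_)
    exact (((hWP'.mul hWP).of_w (by norm_num)).add
      ((hWP.mul hWP').of_w (by norm_num))).const_mul c₀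
  have hWΦ : ARW_Wt β X₂ 2 Φ := by
    rw [hΦdef]; exact (hWew2.mul hWE).of_w (by norm_num)
  have hWΦ' : ARW_Wt β X₂ 2 Φ' := by
    rw [hΦ'def]
    exact (hWew2.mul ((hWE'.mono hX₂0 hβ0 (by norm_num)).add
      (hWE.const_mul _))).of_w (by norm_num)
  have hWG : ARW_Wt β X₂ 0 G := by
    rw [hGdef]; exact (hWew2.mul (hWE'.const_mul (1/2))).of_w (by norm_num)
  have hWH : ARW_Wt β X₂ 2 H := by
    rw [hHdef]; exact hWΦ'.const_mul (1/2)
  -- identities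
  have hGid : ∀ x, H x + β * Φ x = G x := by
    intro x
    rw [hHdef, hΦ'def, hΦdef, hGdef, hβ]
    dsimp only
    ring
  have hΦE : ∀ x, Φ x * Real.exp (((n:ℝ) - 1) * x) = E x := by
    intro x
    rw [hΦdef]
    dsimp only
    rw [hxB x]
    have := hewne x
    field_simp
  have hev_mem : ∀ᶠ τ in nhdsWithin 0 (Set.Iio (0:ℝ)), τ ∈ Set.Ioo (-a) (0:ℝ) := by
    have h2 : Set.Ioo (-a) (0:ℝ) ∈ nhdsWithin 0 (Set.Iio (0:ℝ)) := by
      rw [← Set.Ioi_inter_Iio]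
      exact Filter.inter_mem
        (mem_nhdsWithin_of_mem_nhds (Ioi_mem_nhds (by linarith))) self_mem_nhdsWithin
    exact Filter.eventually_of_mem h2 fun τ hτ => hτ
  -- main limit (third conjunct)
  have htend3 : Filter.Tendsto (fun τ => (deriv f τ) ^ 2 * Real.exp (((n:ℝ) - 1) * f τ))
      (nhdsWithin 0 (Set.Iio 0)) (nhds mt) := by
    refine (hEt.comp hfb).congr' ?_
    filter_upwards [hev_mem] with τ hτ
    show E (f τ) = _
    rw [← hΦE (f τ), ← hΦfried τ hτ]
  have hARW1 : Filter.Tendsto (fun τ => (deriv f τ) ^ 2 * Real.exp (2 * β * f τ))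
      (nhdsWithin 0 (Set.Iio 0)) (nhds mt) := by
    refine htend3.congr fun τ => ?_
    congr 2
    rw [hβ]; ring
  -- limit of G at -infinity
  obtain ⟨L, hL⟩ := hlamlim
  have hGeq : ∀ x, G x = (b * (((n:ℝ) + 1) * Real.exp (2 * x)) + -κt * ((n:ℝ) - 1)
      + c₀ * (2 * (σ * σ * (((n:ℝ) + 1) / 2) * Real.exp (2 * x)
        + σ * ρ₀ * (((n:ℝ) + 1) / 2 + -lam x) * (Real.exp ((3 - (n:ℝ)) / 2 * x) * B x)
        + ρ₀ * ρ₀ * (-(lam x * Real.exp (-((n:ℝ) - 1) * x))) * (B x * B x)))) / 2 := by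
    intro x
    have hA' : e1 x = e3 x * e3 x := by simp only [he1def]; exact hxA x
    have hB' : e2 x = (ew x)⁻¹ := by simp only [he2def]; exact hxB x
    rw [hGdef]
    dsimp only
    rw [hE'def, hP'def, hPdef]
    dsimp only
    rw [hxC x, hxD x, hew_x x, hA', hB']
    have := hewne x
    field_simp
    ring
  have hGt : ∃ L2 : ℝ, Filter.Tendsto G Filter.atBot (nhds L2) := by
    have T2x : Filter.Tendsto (fun x : ℝ => Real.exp (2 * x)) Filter.atBot (nhds 0) :=
      hexp0 2 two_pos
    rcases eq_or_lt_of_le hn with h3 | h3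
    · -- n = 3
      have hn3 : (n:ℝ) = 3 := by exact_mod_cast h3.symm
      have h30 : (3 - (n:ℝ)) / 2 = 0 := by rw [hn3]; norm_num
      have Tσ : Filter.Tendsto (fun x => Real.exp ((3 - (n:ℝ)) / 2 * x) * B x)
          Filter.atBot (nhds 1) := by
        simp only [h30, zero_mul, Real.exp_zero, one_mul]
        simpa using hBt
      have TlamL : Filter.Tendsto (fun x => ((n:ℝ) + 1) / 2 + -lam x) Filter.atBot
          (nhds (((n:ℝ) + 1) / 2 + -0)) := tendsto_const_nhds.add hlam0.neg
      have t1 := (T2x.const_mul (((n:ℝ) + 1))).const_mul b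
      have t2 : Filter.Tendsto (fun _ : ℝ => -κt * ((n:ℝ) - 1)) Filter.atBot
          (nhds (-κt * ((n:ℝ) - 1))) := tendsto_const_nhds
      have t3 := T2x.const_mul (σ * σ * (((n:ℝ) + 1) / 2))
      have t4 := (TlamL.const_mul (σ * ρ₀)).mul Tσ
      have t5 := (hL.neg.const_mul (ρ₀ * ρ₀)).mul (hBt.mul hBt)
      have t6 := (((t3.add t4).add t5).const_mul 2).const_mul c₀
      have t7 := ((t1.add t2).add t6).div_const 2
      exact ⟨_, t7.congr fun x => (hGeq x).symm⟩
    · -- n > 3, σ = 0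
      have hσ0 : σ = 0 := hσ h3
      have hGeq' : ∀ x, G x = (b * (((n:ℝ) + 1) * Real.exp (2 * x)) + -κt * ((n:ℝ) - 1)
          + c₀ * (2 * (ρ₀ * ρ₀ * (-(lam x * Real.exp (-((n:ℝ) - 1) * x))) * (B x * B x)))) / 2 := by
        intro x; rw [hGeq x, hσ0]; ring
      have t1 := (T2x.const_mul (((n:ℝ) + 1))).const_mul b
      have t2 : Filter.Tendsto (fun _ : ℝ => -κt * ((n:ℝ) - 1)) Filter.atBot
          (nhds (-κt * ((n:ℝ) - 1))) := tendsto_const_nhds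
      have t5 := (hL.neg.const_mul (ρ₀ * ρ₀)).mul (hBt.mul hBt)
      have t6 := (t5.const_mul 2).const_mul c₀
      have t7 := ((t1.add t2).add t6).div_const 2
      exact ⟨_, t7.congr fun x => (hGeq' x).symm⟩
  have hARW2 : ∃ L2 : ℝ, Filter.Tendsto (fun τ => deriv (deriv f) τ + β * (deriv f τ) ^ 2)
      (nhdsWithin 0 (Set.Iio 0)) (nhds L2) := by
    obtain ⟨L2, hG2⟩ := hGt
    refine ⟨L2, (hG2.comp hfb).congr' ?_⟩
    filter_upwards [hev_mem] with τ hτ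
    show G (f τ) = _
    rw [hf'' τ hτ, hΦfried τ hτ]
    exact (hGid (f τ)).symm
  -- the iteration operator
  set stepP : ((ℝ → ℝ) × (ℝ → ℝ)) → ((ℝ → ℝ) × (ℝ → ℝ)) :=
    fun p => (fun x => deriv p.2 x * Φ x + p.2 x * H x, deriv p.1) with hstepdef
  have hGood : ∀ (u : ℝ → ℝ) (w : ℤ), ARW_Wt β X₂ w u → ∀ k : ℕ,
      ARW_Wt β X₂ (w + k) (stepP^[k] (u, fun _ => 0)).1
      ∧ ARW_Wt β X₂ (w + k - 1) (stepP^[k] (u, fun _ => 0)).2 := by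
    intro u w hu k
    induction k with
    | zero =>
      exact ⟨hu.of_w (by push_cast; ring), ARW_Wt.zero⟩
    | succ k ih =>
      rw [Function.iterate_succ_apply']
      constructor
      · simp only [hstepdef]
        exact ((ih.2.deriv'.mul hWΦ).of_w (by push_cast; ring)).add
          ((ih.2.mul hWH).of_w (by push_cast; ring))
      · simp only [hstepdef]
        exact ih.1.deriv'.of_w (by push_cast; ring)
  have hcomp : ∀ (u : ℝ → ℝ) (w : ℤ), ARW_Wt β X₂ w u → ∀ (k : ℕ), ∀ τ ∈ Set.Ioo (-a) (0:ℝ),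
      iteratedDeriv k (fun t => u (f t)) τ
        = (stepP^[k] (u, fun _ => 0)).1 (f τ)
          + (stepP^[k] (u, fun _ => 0)).2 (f τ) * deriv f τ := by
    intro u w hu k
    induction k with
    | zero =>
      intro τ hτ
      simp
    | succ k ih =>
      intro τ hτ
      have hAs : ContDiff ℝ (⊤:ℕ∞) (stepP^[k] (u, fun _ => 0)).1 := (hGood u w hu k).1.1
      have hBs' : ContDiff ℝ (⊤:ℕ∞) (stepP^[k] (u, fun _ => 0)).2 := (hGood u w hu k).2.1
      rw [iteratedDeriv_succ]
      have hev : iteratedDeriv k (fun t => u (f t)) =ᶠ[nhds τ]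
          fun t => (stepP^[k] (u, fun _ => 0)).1 (f t)
            + (stepP^[k] (u, fun _ => 0)).2 (f t) * deriv f t :=
        Filter.eventually_of_mem (hsopen.mem_nhds hτ) (fun t ht => ih t ht)
      rw [hev.deriv_eq]
      have hd1 : HasDerivAt (fun t => (stepP^[k] (u, fun _ => 0)).1 (f t))
          (deriv (stepP^[k] (u, fun _ => 0)).1 (f τ) * deriv f τ) τ :=
        HasDerivAt.comp τ
          ((hAs.differentiable (by simp)) (f τ)).hasDerivAt
          (hfd1 τ hτ).hasDerivAt
      have hd2 : HasDerivAt (fun t => (stepP^[k] (u, fun _ => 0)).2 (f t))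
          (deriv (stepP^[k] (u, fun _ => 0)).2 (f τ) * deriv f τ) τ :=
        HasDerivAt.comp τ
          ((hBs'.differentiable (by simp)) (f τ)).hasDerivAt
          (hfd1 τ hτ).hasDerivAt
      have hd3 : HasDerivAt (deriv f) (deriv (deriv f) τ) τ := (hfd2 τ hτ).hasDerivAt
      have hd := hd1.add (hd2.mul hd3)
      erw [hd.deriv]
      rw [Function.iterate_succ_apply']
      simp only [hstepdef]
      rw [hf'' τ hτ]
      have hsq : deriv f τ * deriv f τ = Φ (f τ) := by
        have h := hΦfried τ hτ; rwa [pow_two] at h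
      linear_combination (deriv (stepP^[k] (u, fun _ => 0)).2 (f τ)) * hsq
  -- comparison of exp weight with |f'|
  have hqf : ∀ τ ∈ Set.Ioo (-δ) (0:ℝ),
      Real.exp (-β * f τ) ≤ Real.sqrt (2 / mt) * |deriv f τ| := by
    intro τ hτ
    have hfX : f τ ≤ X₂ := hδX τ hτ
    have hτa : τ ∈ Set.Ioo (-a) 0 := hδsub hτ
    have h1 : Real.exp (-β * f τ) ^ 2 = Real.exp (-((n:ℝ) - 1) * f τ) := by
      rw [← Real.exp_nat_mul]
      congr 1; rw [hβ]; push_cast; ring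
    have h2 : Real.exp (-((n:ℝ) - 1) * f τ) * (mt / 2) ≤ (deriv f τ) ^ 2 := by
      rw [hΦfried τ hτa, hΦdef]
      dsimp only
      rw [hew_x (f τ)]
      refine mul_le_mul_of_nonneg_left (hX₂E _ hfX) ?_
      rw [hewdef]; positivity
    have h3 : (Real.exp (-β * f τ)) ^ 2 ≤ (Real.sqrt (2 / mt) * |deriv f τ|) ^ 2 := by
      rw [mul_pow, Real.sq_sqrt (by positivity : (0:ℝ) ≤ 2 / mt), sq_abs, h1]
      have h4 : Real.exp (-((n:ℝ) - 1) * f τ)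
          = Real.exp (-((n:ℝ) - 1) * f τ) * (mt / 2) * (2 / mt) := by
        field_simp
      rw [h4]
      calc Real.exp (-((n:ℝ) - 1) * f τ) * (mt / 2) * (2 / mt)
          ≤ (deriv f τ) ^ 2 * (2 / mt) :=
            mul_le_mul_of_nonneg_right h2 (by positivity)
        _ = 2 / mt * (deriv f τ) ^ 2 := by ring
    calc Real.exp (-β * f τ) = Real.sqrt ((Real.exp (-β * f τ)) ^ 2) :=
          (Real.sqrt_sq (Real.exp_pos _).le).symm
      _ ≤ Real.sqrt ((Real.sqrt (2 / mt) * |deriv f τ|) ^ 2) := Real.sqrt_le_sqrt h3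
      _ = Real.sqrt (2 / mt) * |deriv f τ| := Real.sqrt_sq (by positivity)
  -- the central bound
  have hbound : ∀ (u : ℝ → ℝ) (w : ℕ), ARW_Wt β X₂ (w:ℤ) u → ∀ (k j0 : ℕ), w + k = j0 + 1 →
      ∃ c : ℝ, 0 ≤ c ∧ ∀ τ ∈ Set.Ioo (-δ) (0:ℝ),
        |iteratedDeriv k (fun t => u (f t)) τ| ≤ c * |deriv f τ| ^ (w + k) := by
    intro u w hu k j0 hj0
    obtain ⟨hA, hB⟩ := hGood u (w:ℤ) hu k
    obtain ⟨CA, hCA0, hCA⟩ := hA.2 0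
    obtain ⟨CB, hCB0, hCB⟩ := hB.2 0
    set q := Real.sqrt (2 / mt) with hqdef
    have hq0 : 0 ≤ q := Real.sqrt_nonneg _
    refine ⟨CA * q ^ (w + k) + CB * q ^ j0, by positivity, fun τ hτ => ?_⟩
    have hτa := hδsub hτ
    have hfX : f τ ≤ X₂ := hδX τ hτ
    have hqτ := hqf τ hτ
    rw [hcomp u w hu k τ hτa]
    have hCA' := hCA (f τ) hfX
    have hCB' := hCB (f τ) hfX
    rw [iteratedDeriv_zero] at hCA' hCB'
    have hexpw : ∀ jj : ℕ, Real.exp (-(β * ((jj:ℕ):ℝ)) * f τ) = Real.exp (-β * f τ) ^ jj := by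
      intro jj
      rw [← Real.exp_nat_mul]
      congr 1; ring
    have hCA2 : |(stepP^[k] (u, fun _ => 0)).1 (f τ)| ≤ CA * Real.exp (-β * f τ) ^ (w + k) := by
      have harg : (((w:ℤ) + (k:ℤ) : ℤ) : ℝ) = ((w + k : ℕ) : ℝ) := by push_cast; ring
      rw [harg, hexpw (w + k)] at hCA'
      exact hCA'
    have hCB2 : |(stepP^[k] (u, fun _ => 0)).2 (f τ)| ≤ CB * Real.exp (-β * f τ) ^ j0 := by
      have hcast : ((w:ℝ) + (k:ℝ)) = (j0:ℝ) + 1 := by exact_mod_cast congrArg (Nat.cast : ℕ → ℝ) hj0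
      have harg : (((w:ℤ) + (k:ℤ) - 1 : ℤ) : ℝ) = ((j0:ℕ) : ℝ) := by push_cast; linarith
      rw [harg, hexpw j0] at hCB'
      exact hCB'
    have hstep1 : |(stepP^[k] (u, fun _ => 0)).1 (f τ)
          + (stepP^[k] (u, fun _ => 0)).2 (f τ) * deriv f τ|
        ≤ CA * Real.exp (-β * f τ) ^ (w + k)
          + CB * Real.exp (-β * f τ) ^ j0 * |deriv f τ| := by
      refine (abs_add_le _ _).trans ?_
      rw [abs_mul]
      exact add_le_add hCA2 (mul_le_mul_of_nonneg_right hCB2 (abs_nonneg _))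
    refine hstep1.trans ?_
    have hp1 : Real.exp (-β * f τ) ^ (w + k) ≤ (q * |deriv f τ|) ^ (w + k) :=
      pow_le_pow_left₀ (Real.exp_pos _).le hqτ _
    have hp2 : Real.exp (-β * f τ) ^ j0 ≤ (q * |deriv f τ|) ^ j0 :=
      pow_le_pow_left₀ (Real.exp_pos _).le hqτ _
    calc CA * Real.exp (-β * f τ) ^ (w + k) + CB * Real.exp (-β * f τ) ^ j0 * |deriv f τ|
        ≤ CA * (q * |deriv f τ|) ^ (w + k) + CB * (q * |deriv f τ|) ^ j0 * |deriv f τ| := by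
          refine add_le_add (mul_le_mul_of_nonneg_left hp1 hCA0) ?_
          exact mul_le_mul_of_nonneg_right (mul_le_mul_of_nonneg_left hp2 hCB0) (abs_nonneg _)
      _ = (CA * q ^ (w + k) + CB * q ^ j0) * |deriv f τ| ^ (w + k) := by
          rw [hj0]
          rw [mul_pow, mul_pow]
          ring
  -- assemble the third ARW condition
  have hARW3 : ∀ k : ℕ, 1 ≤ k → ∃ c : ℝ, ∀ τ ∈ Set.Ioo (-δ) (0:ℝ),
      |iteratedDeriv k (fun s => deriv (deriv f) s + β * (deriv f s) ^ 2) τ|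
          ≤ c * |deriv f τ| ^ k
      ∧ |iteratedDeriv k f τ| ≤ c * |deriv f τ| ^ k := by
    intro k hk
    obtain ⟨k', rfl⟩ : ∃ k', k = k' + 1 := ⟨k - 1, by omega⟩
    obtain ⟨c1, hc10, hc1⟩ := hbound G 0 hWG (k' + 1) k' (by omega)
    have hG1 : ∀ τ ∈ Set.Ioo (-δ) (0:ℝ),
        |iteratedDeriv (k' + 1) (fun s => deriv (deriv f) s + β * (deriv f s) ^ 2) τ|
          ≤ c1 * |deriv f τ| ^ (k' + 1) := by
      intro τ hτ
      have hEq : iteratedDeriv (k' + 1) (fun s => deriv (deriv f) s + β * (deriv f s) ^ 2) τ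
          = iteratedDeriv (k' + 1) (fun t => G (f t)) τ := by
        refine Filter.EventuallyEq.iteratedDeriv_eq _ ?_
        filter_upwards [hsopen.mem_nhds (hδsub hτ)] with t ht
        rw [hf'' t ht, hΦfried t ht]
        exact hGid (f t)
      rw [hEq]
      have h := hc1 τ hτ
      simpa using h
    rcases Nat.eq_zero_or_pos k' with hk0 | hk1
    · subst hk0
      refine ⟨max c1 1, fun τ hτ => ⟨?_, ?_⟩⟩
      · exact (hG1 τ hτ).trans (mul_le_mul_of_nonneg_right (le_max_left _ _)
          (pow_nonneg (abs_nonneg _) _))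
      · rw [iteratedDeriv_one, pow_one]
        calc |deriv f τ| = 1 * |deriv f τ| := (one_mul _).symm
          _ ≤ max c1 1 * |deriv f τ| :=
            mul_le_mul_of_nonneg_right (le_max_right _ _) (abs_nonneg _)
    · obtain ⟨k'', rfl⟩ : ∃ k'', k' = k'' + 1 := ⟨k' - 1, by omega⟩
      obtain ⟨c2, hc20, hc2⟩ := hbound H 2 hWH k'' (k'' + 1) (by omega)
      refine ⟨max c1 c2, fun τ hτ => ⟨?_, ?_⟩⟩
      · exact (hG1 τ hτ).trans (mul_le_mul_of_nonneg_right (le_max_left _ _)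
          (pow_nonneg (abs_nonneg _) _))
      · have hEq : iteratedDeriv (k'' + 1 + 1) f τ = iteratedDeriv k'' (fun t => H (f t)) τ := by
          rw [iteratedDeriv_succ', iteratedDeriv_succ']
          refine Filter.EventuallyEq.iteratedDeriv_eq _ ?_
          filter_upwards [hsopen.mem_nhds (hδsub hτ)] with t ht
          exact hf'' t ht
        rw [hEq]
        have h := hc2 τ hτ
        rw [show 2 + k'' = k'' + 1 + 1 from by omega] at h
        exact h.trans (mul_le_mul_of_nonneg_right (le_max_right _ _)
          (pow_nonneg (abs_nonneg _) _))
  refine ⟨⟨hARW1, hARW2, δ, hδ0, hARW3⟩, ?_, htend3⟩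
  have hpos : 0 < c₀ * ρ₀ ^ 2 := mul_pos hc₀0 (pow_pos hρ₀ 2)
  rw [hmt] at *
  linarith
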